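/- Let T be a positively edge-weighted phylogenetic X-tree with |X| = n, let 2 ≤ m ≤ n, let D be the m-subtree weight map of T, and let S_D(i,j) = Σ D({i,j} ∪ Y), the sum over all (m−2)-element subsets Y of X \ {i,j}. If (a1,a2;a3,a4) is a tree quartet of T, then S_D(a1,a3) + S_D(a2,a4) = S_D(a1,a4) + S_D(a2,a3). -/

import Mathlib

open SimpleGraph Finset

attribute [local instance] Classical.propDecidable

noncomputable section

/-- `e` lies on some path (hence on the unique path, in a tree) from `a` to `b`. -/
def OnPath {V : Type*} (G : SimpleGraph V) (a b : V) (e : Sym2 V) : Prop :=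
  ∃ p : G.Walk a b, p.IsPath ∧ e ∈ p.edges

/-- The edge set `[R]` of the smallest subtree of a tree `G` spanning `R`. -/
def subtreeEdges {V : Type*} [Fintype V] (G : SimpleGraph V) (R : Finset V) :
    Finset (Sym2 V) :=
  G.edgeFinset.filter fun e => ∃ a ∈ R, ∃ b ∈ R, OnPath G a b e

/-- The subtree weight `D(R) = ∑_{e ∈ [R]} w(e)`. -/
def subtreeWeight {V : Type*} [Fintype V] (G : SimpleGraph V) (w : Sym2 V → ℝ)
    (R : Finset V) : ℝ :=
  ∑ e ∈ subtreeEdges G R, w e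

/-- `L_i(e)`: the set of leaves in the component of `T - e` containing `i`. -/
def leafSide {V : Type*} [Fintype V] (G : SimpleGraph V) (X : Finset V)
    (i : V) (e : Sym2 V) : Finset V :=
  X.filter fun x => (G.deleteEdges {e}).Reachable i x

/-- `S_D(i,j) = ∑_{Y ∈ C(X \ {i,j}, m-2)} D({i,j} ∪ Y)`. -/
def SDmap {V : Type*} [Fintype V] (G : SimpleGraph V) (w : Sym2 V → ℝ)
    (X : Finset V) (m : ℕ) (i j : V) : ℝ :=
  ∑ Y ∈ ((X.erase i).erase j).powersetCard (m - 2),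
    subtreeWeight G w (insert i (insert j Y))

/-- Binomial coefficient with integer arguments, `0` whenever `b < 0` or `a < b`. -/
def C (a b : ℤ) : ℤ := if 0 ≤ b ∧ b ≤ a then (a.toNat.choose b.toNat : ℤ) else 0

/-- `(i,j;k,l)` is a tree quartet: the (unique) path from `i` to `j` and the (unique) path
from `k` to `l` share no edges. -/
def IsQuartet {V : Type*} (G : SimpleGraph V) (i j k l : V) : Prop :=
  ∀ (p : G.Walk i j) (q : G.Walk k l), p.IsPath → q.IsPath →
    ∀ e ∈ p.edges, e ∉ q.edges

/- ### Auxiliary lemmas -/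

lemma notReach_of_mem_edges {V : Type*} {G : SimpleGraph V} (hT : G.IsAcyclic) :
    ∀ {a b : V} (p : G.Walk a b), p.IsPath → ∀ e ∈ p.edges,
      ¬(G.deleteEdges {e}).Reachable a b := by
  intro a b p
  induction p with
  | nil => simp
  | @cons a c b h q ih =>
    intro hp e he hr
    rw [SimpleGraph.Walk.edges_cons, List.mem_cons] at he
    have hq : q.IsPath := hp.of_cons
    have hnd := hp.isTrail.edges_nodup
    rw [SimpleGraph.Walk.edges_cons, List.nodup_cons] at hnd
    rcases he with rfl | he2
    · have hbr : G.IsBridge s(a,c) := (isAcyclic_iff_forall_edge_isBridge.mp hT) h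
      have q' := q.toDeleteEdges {s(a,c)} (fun f hf => by
        simp only [Set.mem_singleton_iff]
        rintro rfl; exact hnd.1 hf)
      have hreach : (G.deleteEdges {s(a,c)}).Reachable a c := hr.trans q'.reachable.symm
      rw [isBridge_iff] at hbr
      exact hbr hreach
    · have hne : s(a,c) ≠ e := fun hh => hnd.1 (hh ▸ he2)
      have hadj : (G.deleteEdges {e}).Adj a c :=
        SimpleGraph.deleteEdges_adj.mpr ⟨h, by simpa using hne⟩
      exact ih hq e he2 (hadj.reachable.symm.trans hr)

lemma onPath_of_not_reach {V : Type*} {G : SimpleGraph V} (hc : G.Connected) {a b : V}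
    {e : Sym2 V} (h : ¬(G.deleteEdges {e}).Reachable a b) : OnPath G a b e := by
  obtain ⟨q⟩ := hc.preconnected a b
  refine ⟨q.toPath, q.toPath.2, ?_⟩
  by_contra hep
  exact h ⟨(q.toPath : G.Walk a b).toDeleteEdges {e} (fun f hf => by
    simp only [Set.mem_singleton_iff]; rintro rfl; exact hep hf)⟩

lemma mem_subtree_iff {V : Type*} [Fintype V] {G : SimpleGraph V} (hT : G.IsTree)
    {R : Finset V} {e : Sym2 V} :
    e ∈ subtreeEdges G R ↔
      e ∈ G.edgeFinset ∧ ∃ a ∈ R, ∃ b ∈ R, ¬(G.deleteEdges {e}).Reachable a b := by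
  unfold subtreeEdges
  rw [mem_filter]
  constructor
  · rintro ⟨hef, a, ha, b, hb, p, hp, hep⟩
    exact ⟨hef, a, ha, b, hb, notReach_of_mem_edges hT.2 p hp e hep⟩
  · rintro ⟨hef, a, ha, b, hb, hr⟩
    exact ⟨hef, a, ha, b, hb, onPath_of_not_reach hT.1 hr⟩

lemma bad_card {V : Type*} [Fintype V] {G : SimpleGraph V} (hT : G.IsTree) (X : Finset V)
    (k : ℕ) {e : Sym2 V} (he : e ∈ G.edgeFinset) {i j : V}
    (hi : i ∈ X) (hj : j ∈ X) (hij : i ≠ j) :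
    ((((X.erase i).erase j).powersetCard k).filter
        (fun Y => e ∉ subtreeEdges G (insert i (insert j Y)))).card
      = if (G.deleteEdges {e}).Reachable i j
        then (((X.filter fun x => (G.deleteEdges {e}).Reachable i x).card - 2).choose k)
        else 0 := by
  set P : V → Prop := fun x => (G.deleteEdges {e}).Reachable i x with hP
  by_cases hij' : (G.deleteEdges {e}).Reachable i j
  · rw [if_pos hij']
    have hset : (((X.erase i).erase j).powersetCard k).filter
        (fun Y => e ∉ subtreeEdges G (insert i (insert j Y)))
        = (((X.filter P).erase i).erase j).powersetCard k := by
      ext Y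
      simp only [mem_filter, mem_powersetCard, ← filter_erase]
      constructor
      · rintro ⟨⟨hY, hcard⟩, hnot⟩
        refine ⟨fun x hx => ?_, hcard⟩
        rw [mem_filter]
        refine ⟨hY hx, ?_⟩
        rw [mem_subtree_iff hT] at hnot
        push_neg at hnot
        exact hnot he i (mem_insert_self _ _) x
          (mem_insert_of_mem (mem_insert_of_mem hx))
      · rintro ⟨hY, hcard⟩
        have hY' : Y ⊆ (X.erase i).erase j := fun x hx => (mem_filter.mp (hY hx)).1
        refine ⟨⟨hY', hcard⟩, ?_⟩
        rw [mem_subtree_iff hT]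
        push_neg
        intro _ a ha b hb
        have key : ∀ x ∈ insert i (insert j Y), P x := by
          intro x hx
          rcases mem_insert.mp hx with rfl | hx2
          · exact Reachable.refl x
          · rcases mem_insert.mp hx2 with rfl | hx3
            · exact hij'
            · exact (mem_filter.mp (hY hx3)).2
        exact (key a ha).symm.trans (key b hb)
    rw [hset, card_powersetCard]
    congr 1
    have hiP : i ∈ X.filter P := mem_filter.mpr ⟨hi, Reachable.refl i⟩
    have hjP : j ∈ (X.filter P).erase i :=
      mem_erase.mpr ⟨hij.symm, mem_filter.mpr ⟨hj, hij'⟩⟩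
    rw [card_erase_of_mem hjP, card_erase_of_mem hiP]
    rw [Nat.sub_sub]
  · rw [if_neg hij']
    rw [card_eq_zero, filter_eq_empty_iff]
    intro Y _
    simp only [not_not]
    exact (mem_subtree_iff hT).mpr ⟨he, i, mem_insert_self _ _,
      j, mem_insert_of_mem (mem_insert_self _ _), hij'⟩

lemma SDmap_eq_sum_edges {V : Type*} [Fintype V] (G : SimpleGraph V) (w : Sym2 V → ℝ)
    (X : Finset V) (m : ℕ) (i j : V) :
    SDmap G w X m i j = ∑ e ∈ G.edgeFinset,
      (((((X.erase i).erase j).powersetCard (m - 2)).filter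
        (fun Y => e ∈ subtreeEdges G (insert i (insert j Y)))).card : ℝ) * w e := by
  unfold SDmap subtreeWeight
  have h1 : ∀ R : Finset V, ∑ e ∈ subtreeEdges G R, w e
      = ∑ e ∈ G.edgeFinset, if e ∈ subtreeEdges G R then w e else 0 := by
    intro R
    have hsub : subtreeEdges G R ⊆ G.edgeFinset := fun x hx => (mem_filter.mp hx).1
    rw [Finset.sum_ite_mem, Finset.inter_eq_right.mpr hsub]
  simp_rw [h1]
  rw [Finset.sum_comm]
  refine Finset.sum_congr rfl fun e he => ?_
  rw [← Finset.sum_filter, Finset.sum_const, nsmul_eq_mul]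

/-- if `(a1,a2;a3,a4)` is a tree quartet of `T`, then
`S_D(a1,a3) + S_D(a2,a4) = S_D(a1,a4) + S_D(a2,a3)`. -/
theorem SD_quartet_identity
    {V : Type*} [Fintype V] (G : SimpleGraph V) (X : Finset V)
    (hT : G.IsTree)
    (hleaf : ∀ v : V, G.degree v = 1 ↔ v ∈ X)
    (hint : ∀ v : V, v ∉ X → 3 ≤ G.degree v)
    (w : Sym2 V → ℝ) (hw : ∀ e ∈ G.edgeSet, 0 < w e)
    (m : ℕ) (hm : 2 ≤ m) (hmn : m ≤ X.card)
    (a1 a2 a3 a4 : V) (h1 : a1 ∈ X) (h2 : a2 ∈ X) (h3 : a3 ∈ X) (h4 : a4 ∈ X)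
    (h12 : a1 ≠ a2) (h13 : a1 ≠ a3) (h14 : a1 ≠ a4)
    (h23 : a2 ≠ a3) (h24 : a2 ≠ a4) (h34 : a3 ≠ a4)
    (hq : IsQuartet G a1 a2 a3 a4) :
    SDmap G w X m a1 a3 + SDmap G w X m a2 a4 =
      SDmap G w X m a1 a4 + SDmap G w X m a2 a3 := by
  set k := m - 2 with hk
  -- counts
  set cnt : V → V → Sym2 V → ℕ := fun i j e =>
    ((((X.erase i).erase j).powersetCard k).filter
      (fun Y => e ∈ subtreeEdges G (insert i (insert j Y)))).card with hcnt
  rw [SDmap_eq_sum_edges, SDmap_eq_sum_edges, SDmap_eq_sum_edges, SDmap_eq_sum_edges,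
    ← Finset.sum_add_distrib, ← Finset.sum_add_distrib]
  refine Finset.sum_congr rfl fun e he => ?_
  have key : cnt a1 a3 e + cnt a2 a4 e = cnt a1 a4 e + cnt a2 a3 e := by
    -- totals
    set N := (X.card - 2).choose k with hN
    have htot : ∀ i j : V, i ∈ X → j ∈ X → i ≠ j →
        (((X.erase i).erase j).powersetCard k).card = N := by
      intro i j hi hj hij
      rw [card_powersetCard, card_erase_of_mem (mem_erase.mpr ⟨hij.symm, hj⟩),
        card_erase_of_mem hi, Nat.sub_sub]
    have hsplit : ∀ i j : V, i ∈ X → j ∈ X → i ≠ j →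
        cnt i j e + ((((X.erase i).erase j).powersetCard k).filter
          (fun Y => e ∉ subtreeEdges G (insert i (insert j Y)))).card = N := by
      intro i j hi hj hij
      rw [← htot i j hi hj hij, hcnt]
      exact Finset.card_filter_add_card_filter_not _
    have hs13 := hsplit a1 a3 h1 h3 h13
    have hs24 := hsplit a2 a4 h2 h4 h24
    have hs14 := hsplit a1 a4 h1 h4 h14
    have hs23 := hsplit a2 a3 h2 h3 h23
    rw [bad_card hT X k he h1 h3 h13] at hs13
    rw [bad_card hT X k he h2 h4 h24] at hs24
    rw [bad_card hT X k he h1 h4 h14] at hs14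
    rw [bad_card hT X k he h2 h3 h23] at hs23
    -- quartet consequence
    have hor : (G.deleteEdges {e}).Reachable a1 a2 ∨ (G.deleteEdges {e}).Reachable a3 a4 := by
      by_contra hcon
      push_neg at hcon
      obtain ⟨p, hp, hep⟩ := onPath_of_not_reach hT.1 hcon.1
      obtain ⟨q2, hq2, heq⟩ := onPath_of_not_reach hT.1 hcon.2
      exact hq p q2 hp hq2 e hep heq
    have badid :
        (if (G.deleteEdges {e}).Reachable a1 a3
          then (((X.filter fun x => (G.deleteEdges {e}).Reachable a1 x).card - 2).choose k) else 0)
        + (if (G.deleteEdges {e}).Reachable a2 a4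
          then (((X.filter fun x => (G.deleteEdges {e}).Reachable a2 x).card - 2).choose k) else 0)
        = (if (G.deleteEdges {e}).Reachable a1 a4
          then (((X.filter fun x => (G.deleteEdges {e}).Reachable a1 x).card - 2).choose k) else 0)
        + (if (G.deleteEdges {e}).Reachable a2 a3
          then (((X.filter fun x => (G.deleteEdges {e}).Reachable a2 x).card - 2).choose k) else 0) := by
      rcases hor with h12' | h34'
      · have t3 : (G.deleteEdges {e}).Reachable a1 a3 ↔ (G.deleteEdges {e}).Reachable a2 a3 :=
          ⟨fun h => h12'.symm.trans h, fun h => h12'.trans h⟩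
        have t4 : (G.deleteEdges {e}).Reachable a1 a4 ↔ (G.deleteEdges {e}).Reachable a2 a4 :=
          ⟨fun h => h12'.symm.trans h, fun h => h12'.trans h⟩
        have hKc : (X.filter fun x => (G.deleteEdges {e}).Reachable a1 x).card
            = (X.filter fun x => (G.deleteEdges {e}).Reachable a2 x).card := by
          congr 1
          exact Finset.filter_congr fun x _ =>
            ⟨fun h => h12'.symm.trans h, fun h => h12'.trans h⟩
        by_cases c3 : (G.deleteEdges {e}).Reachable a1 a3 <;>
          by_cases c4 : (G.deleteEdges {e}).Reachable a1 a4
        · rw [if_pos c3, if_pos c4, if_pos (t3.mp c3), if_pos (t4.mp c4), hKc]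
        · rw [if_pos c3, if_neg c4, if_pos (t3.mp c3),
            if_neg (fun h => c4 (t4.mpr h)), hKc]
          exact Nat.add_comm _ _
        · rw [if_neg c3, if_pos c4, if_neg (fun h => c3 (t3.mpr h)),
            if_pos (t4.mp c4), hKc]
          exact Nat.add_comm _ _
        · rw [if_neg c3, if_neg c4, if_neg (fun h => c3 (t3.mpr h)),
            if_neg (fun h => c4 (t4.mpr h))]
      · have t1 : (G.deleteEdges {e}).Reachable a1 a3 ↔ (G.deleteEdges {e}).Reachable a1 a4 :=
          ⟨fun h => h.trans h34', fun h => h.trans h34'.symm⟩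
        have t2 : (G.deleteEdges {e}).Reachable a2 a4 ↔ (G.deleteEdges {e}).Reachable a2 a3 :=
          ⟨fun h => h.trans h34'.symm, fun h => h.trans h34'⟩
        by_cases c3 : (G.deleteEdges {e}).Reachable a1 a3 <;>
          by_cases c4 : (G.deleteEdges {e}).Reachable a2 a4
        · rw [if_pos c3, if_pos c4, if_pos (t1.mp c3), if_pos (t2.mp c4)]
        · rw [if_pos c3, if_neg c4, if_pos (t1.mp c3), if_neg (fun h => c4 (t2.mpr h))]
        · rw [if_neg c3, if_pos c4, if_neg (fun h => c3 (t1.mpr h)), if_pos (t2.mp c4)]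
        · rw [if_neg c3, if_neg c4, if_neg (fun h => c3 (t1.mpr h)),
            if_neg (fun h => c4 (t2.mpr h))]
    omega
  rw [← add_mul, ← add_mul, ← Nat.cast_add, ← Nat.cast_add, key]
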